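/- With H, M, P, W as in the extended state-cover setting, let L = L_k(P), L' = L_{k+1}(P), and Z = W[L']. If H(z) = M(z) for all z ∈ Z, then the relation ∼ = {(eval_H(l), eval_M(l)) | l ∈ L} is a bisimulation between H and M. -/
import Mathlib


/-- Syntactic terms for series-parallel pomsets over alphabet `σ`. -/
inductive SPTerm (σ : Type) : Type
  | eps : SPTerm σ
  | letter (a : σ) : SPTerm σ
  | seq (t u : SPTerm σ) : SPTerm σ
  | par (t u : SPTerm σ) : SPTerm σ

/-- Semantic equality of terms: the congruence generated by associativity of
both compositions, commutativity of `par`, and neutrality of `eps`.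
By freeness of SP in the variety of bimonoids, two terms denote the same
series-parallel pomset iff they are related by this relation. -/
inductive SPEquiv {σ : Type} : SPTerm σ → SPTerm σ → Prop
  | refl (t) : SPEquiv t t
  | symm {t u} : SPEquiv t u → SPEquiv u t
  | trans {t u v} : SPEquiv t u → SPEquiv u v → SPEquiv t v
  | seq_congr {t t' u u'} : SPEquiv t t' → SPEquiv u u' → SPEquiv (.seq t u) (.seq t' u')
  | par_congr {t t' u u'} : SPEquiv t t' → SPEquiv u u' → SPEquiv (.par t u) (.par t' u')
  | seq_assoc (t u v) : SPEquiv (.seq (.seq t u) v) (.seq t (.seq u v))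
  | par_assoc (t u v) : SPEquiv (.par (.par t u) v) (.par t (.par u v))
  | par_comm (t u) : SPEquiv (.par t u) (.par u t)
  | seq_eps_left (t) : SPEquiv (.seq .eps t) t
  | seq_eps_right (t) : SPEquiv (.seq t .eps) t
  | par_eps (t) : SPEquiv (.par t .eps) t

def SPSetoid (σ : Type) : Setoid (SPTerm σ) :=
  ⟨SPEquiv, ⟨SPEquiv.refl, SPEquiv.symm, SPEquiv.trans⟩⟩

/-- Series-parallel pomsets over `σ`. -/
def SP (σ : Type) : Type := Quotient (SPSetoid σ)

def SP.mk {σ : Type} (t : SPTerm σ) : SP σ := Quotient.mk (SPSetoid σ) t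

/-- The empty pomset ε. -/
def SP.eps {σ : Type} : SP σ := SP.mk .eps

/-- The singleton pomset labelled by `a`. -/
def SP.letter {σ : Type} (a : σ) : SP σ := SP.mk (.letter a)

/-- Sequential composition of series-parallel pomsets. -/
def SP.seq {σ : Type} : SP σ → SP σ → SP σ :=
  Quotient.map₂ SPTerm.seq (fun _ _ h _ _ h' => SPEquiv.seq_congr h h')

/-- Parallel composition of series-parallel pomsets. -/
def SP.par {σ : Type} : SP σ → SP σ → SP σ :=
  Quotient.map₂ SPTerm.par (fun _ _ h _ _ h' => SPEquiv.par_congr h h')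

/-- A bimonoid structure on `M`: two associative operations, `par`
additionally commutative, sharing the neutral element `one`. -/
structure BimonoidStr (M : Type) where
  seq : M → M → M
  par : M → M → M
  one : M
  seq_assoc : ∀ a b c, seq (seq a b) c = seq a (seq b c)
  par_assoc : ∀ a b c, par (par a b) c = par a (par b c)
  par_comm : ∀ a b, par a b = par b a
  seq_one : ∀ a, seq a one = a
  one_seq : ∀ a, seq one a = a
  par_one : ∀ a, par a one = a

/-- Evaluation of a term in a bimonoid, extending `i : σ → M`. -/
def termEval {σ M : Type} (str : BimonoidStr M) (i : σ → M) : SPTerm σ → M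
  | .eps => str.one
  | .letter a => i a
  | .seq t u => str.seq (termEval str i t) (termEval str i u)
  | .par t u => str.par (termEval str i t) (termEval str i u)

theorem termEval_congr {σ M : Type} (str : BimonoidStr M) (i : σ → M)
    {t u : SPTerm σ} (h : SPEquiv t u) : termEval str i t = termEval str i u := by
  induction h with
  | refl => rfl
  | symm _ ih => exact ih.symm
  | trans _ _ ih1 ih2 => exact ih1.trans ih2
  | seq_congr _ _ ih1 ih2 => simp only [termEval, ih1, ih2]
  | par_congr _ _ ih1 ih2 => simp only [termEval, ih1, ih2]
  | seq_assoc t u v => simp only [termEval]; exact str.seq_assoc _ _ _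
  | par_assoc t u v => simp only [termEval]; exact str.par_assoc _ _ _
  | par_comm t u => simp only [termEval]; exact str.par_comm _ _
  | seq_eps_left t => simp only [termEval]; exact str.one_seq _
  | seq_eps_right t => simp only [termEval]; exact str.seq_one _
  | par_eps t => simp only [termEval]; exact str.par_one _

/-- A pomset recognizer with state set `M`: a finite bimonoid together with
an interpretation of letters and a set of accepting states. -/
structure Recognizer (σ M : Type) where
  fin : Finite M
  str : BimonoidStr M
  i : σ → M
  F : Set M

/-- The unique homomorphic extension of `R.i` to series-parallel pomsets. -/
def Recognizer.eval {σ M : Type} (R : Recognizer σ M) : SP σ → M :=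
  Quotient.lift (termEval R.str R.i) (fun _ _ h => termEval_congr R.str R.i h)

/-- `R` accepts the pomset `w`. -/
def Recognizer.accepts {σ M : Type} (R : Recognizer σ M) (w : SP σ) : Prop :=
  R.eval w ∈ R.F

/-- The language of a recognizer. -/
def Recognizer.lang {σ M : Type} (R : Recognizer σ M) : Set (SP σ) :=
  {w | R.accepts w}

/-- 1-contexts: series-parallel pomsets with exactly one placeholder □. -/
inductive Ctx (σ : Type) : Type
  | hole : Ctx σ
  | seqL (c : Ctx σ) (w : SP σ) : Ctx σ
  | seqR (w : SP σ) (c : Ctx σ) : Ctx σ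
  | parL (c : Ctx σ) (w : SP σ) : Ctx σ
  | parR (w : SP σ) (c : Ctx σ) : Ctx σ

/-- Substitution of a pomset for the placeholder of a context: `c[z]`. -/
def Ctx.app {σ : Type} : Ctx σ → SP σ → SP σ
  | .hole, z => z
  | .seqL c w, z => SP.seq (c.app z) w
  | .seqR w c, z => SP.seq w (c.app z)
  | .parL c w, z => SP.par (c.app z) w
  | .parR w c, z => SP.par w (c.app z)

/-- `c` distinguishes `w1` and `w2` in `R`: exactly one of `c[w1]`, `c[w2]` is accepted. -/
def Distinguishes {σ M : Type} (R : Recognizer σ M) (c : Ctx σ) (w1 w2 : SP σ) : Prop :=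
  ¬ (R.accepts (c.app w1) ↔ R.accepts (c.app w2))

/-- Every state admits an access sequence. -/
def ReachablePR {σ M : Type} (R : Recognizer σ M) : Prop :=
  ∀ m : M, ∃ w : SP σ, R.eval w = m

/-- A minimal recognizer: reachable, and any two distinct states (given by
access sequences) are distinguished by some 1-context. -/
def MinimalPR {σ M : Type} (R : Recognizer σ M) : Prop :=
  ReachablePR R ∧ ∀ w1 w2 : SP σ, R.eval w1 ≠ R.eval w2 → ∃ c : Ctx σ, Distinguishes R c w1 w2

/-- A characterisation set: contains □ and distinguishes every distinguishable
pair of states (given by access sequences). -/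
def CharSet {σ M : Type} (R : Recognizer σ M) (W : Set (Ctx σ)) : Prop :=
  Ctx.hole ∈ W ∧
  ∀ w1 w2 : SP σ, (∃ c : Ctx σ, Distinguishes R c w1 w2) → ∃ c ∈ W, Distinguishes R c w1 w2

/-- A state cover: contains ε and an access sequence for every state. -/
def StateCover {σ M : Type} (R : Recognizer σ M) (P : Set (SP σ)) : Prop :=
  SP.eps ∈ P ∧ ∀ m : M, ∃ p ∈ P, R.eval p = m

/-- `Lcov P i`: all pomsets obtained by filling a multi-context of depth at
most `i` with elements of `P`.  A depth-0 multi-context is a placeholder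
(filled by an element of `P`), a letter, or ε; a filled multi-context of depth
at most `i+1` is either of depth at most `i` or a sequential or parallel
composition of two filled multi-contexts of depth at most `i`. -/
def Lcov {σ : Type} (P : Set (SP σ)) : ℕ → Set (SP σ)
  | 0 => P ∪ Set.range SP.letter ∪ {SP.eps}
  | i + 1 => Lcov P i ∪
      {w | ∃ u ∈ Lcov P i, ∃ v ∈ Lcov P i, w = SP.seq u v ∨ w = SP.par u v}

/-- A bisimulation between two pomset recognizers: related states agree on
acceptance and the relation is compatible with both operations. -/
def IsBisim {σ M1 M2 : Type} (R1 : Recognizer σ M1) (R2 : Recognizer σ M2)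
    (r : M1 → M2 → Prop) : Prop :=
  (∀ m1 m2, r m1 m2 → (m1 ∈ R1.F ↔ m2 ∈ R2.F)) ∧
  (∀ m1 m2 m1' m2', r m1 m2 → r m1' m2' →
    r (R1.str.seq m1 m1') (R2.str.seq m2 m2') ∧ r (R1.str.par m1 m1') (R2.str.par m2 m2'))

section Aux

variable {σ mH mM N : Type}

lemma eval_seq (R : Recognizer σ N) (u v : SP σ) :
    R.eval (SP.seq u v) = R.str.seq (R.eval u) (R.eval v) := by
  induction u using Quotient.inductionOn
  induction v using Quotient.inductionOn
  rfl

lemma eval_par (R : Recognizer σ N) (u v : SP σ) :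
    R.eval (SP.par u v) = R.str.par (R.eval u) (R.eval v) := by
  induction u using Quotient.inductionOn
  induction v using Quotient.inductionOn
  rfl

/-- Evaluation of a context as a function on states. -/
def ctxEval (R : Recognizer σ N) : Ctx σ → N → N
  | .hole => id
  | .seqL c w => fun m => R.str.seq (ctxEval R c m) (R.eval w)
  | .seqR w c => fun m => R.str.seq (R.eval w) (ctxEval R c m)
  | .parL c w => fun m => R.str.par (ctxEval R c m) (R.eval w)
  | .parR w c => fun m => R.str.par (R.eval w) (ctxEval R c m)

lemma eval_ctx (R : Recognizer σ N) (c : Ctx σ) (z : SP σ) :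
    R.eval (c.app z) = ctxEval R c (R.eval z) := by
  induction c <;> simp [Ctx.app, ctxEval, eval_seq, eval_par, *]

/-- The pair set at level `i`. -/
def pairSet (H : Recognizer σ mH) (M : Recognizer σ mM) (P : Set (SP σ)) (i : ℕ) :
    Set (mH × mM) :=
  {p | ∃ l ∈ Lcov P i, H.eval l = p.1 ∧ M.eval l = p.2}

lemma Lcov_succ_subset (P : Set (SP σ)) (i : ℕ) : Lcov P i ⊆ Lcov P (i + 1) :=
  Set.subset_union_left

lemma pairSet_mono (H : Recognizer σ mH) (M : Recognizer σ mM) (P : Set (SP σ)) (i : ℕ) :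
    pairSet H M P i ⊆ pairSet H M P (i + 1) := by
  rintro p ⟨l, hl, h1, h2⟩
  exact ⟨l, Lcov_succ_subset P i hl, h1, h2⟩

lemma pairSet_closure (H : Recognizer σ mH) (M : Recognizer σ mM) (P : Set (SP σ)) (i : ℕ)
    (h : pairSet H M P (i + 1) ⊆ pairSet H M P i) :
    pairSet H M P (i + 2) ⊆ pairSet H M P (i + 1) := by
  rintro p ⟨l, hl, h1, h2⟩
  rcases hl with hl | ⟨u, hu, v, hv, huv⟩
  · exact ⟨l, hl, h1, h2⟩
  · obtain ⟨u', hu', hu1, hu2⟩ := h (show (H.eval u, M.eval u) ∈ pairSet H M P (i+1) from ⟨u, hu, rfl, rfl⟩)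
    obtain ⟨v', hv', hv1, hv2⟩ := h (show (H.eval v, M.eval v) ∈ pairSet H M P (i+1) from ⟨v, hv, rfl, rfl⟩)
    rcases huv with rfl | rfl
    · refine ⟨SP.seq u' v', Or.inr ⟨u', hu', v', hv', Or.inl rfl⟩, ?_, ?_⟩
      · rw [eval_seq, hu1, hv1]; rw [eval_seq] at h1; exact h1
      · rw [eval_seq, hu2, hv2]; rw [eval_seq] at h2; exact h2
    · refine ⟨SP.par u' v', Or.inr ⟨u', hu', v', hv', Or.inr rfl⟩, ?_, ?_⟩
      · rw [eval_par, hu1, hv1]; rw [eval_par] at h1; exact h1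
      · rw [eval_par, hu2, hv2]; rw [eval_par] at h2; exact h2

end Aux

/-- if `H` and `M` agree on the test suite `Z = W[L_{k+1}(P)]`,
then `{(eval_H l, eval_M l) | l ∈ L_k(P)}` is a bisimulation between `H` and `M`. -/
theorem test_suite_induces_bisim {σ mH mM : Type} (H : Recognizer σ mH) (M : Recognizer σ mM)
    (n k : ℕ) (hH : MinimalPR H) (hM : MinimalPR M)
    (hn : Nat.card mH = n) (hlo : n ≤ Nat.card mM) (hhi : Nat.card mM ≤ n + k)
    (P : Set (SP σ)) (hP : StateCover H P)
    (W : Set (Ctx σ)) (hW : CharSet H W)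
    (hagree : ∀ c ∈ W, ∀ l ∈ Lcov P (k + 1), (H.accepts (c.app l) ↔ M.accepts (c.app l))) :
    IsBisim H M (fun x y => ∃ l ∈ Lcov P k, H.eval l = x ∧ M.eval l = y) := by
  haveI := H.fin
  haveI := M.fin
  have hLmono : ∀ i j : ℕ, i ≤ j → Lcov P i ⊆ Lcov P j := by
    intro i j hij
    induction j, hij using Nat.le_induction with
    | base => exact subset_rfl
    | succ j hj ih => exact ih.trans (Lcov_succ_subset P j)
  -- the second projection is injective on the level-(k+1) pair set
  have hsnd : ∀ p ∈ pairSet H M P (k+1), ∀ q ∈ pairSet H M P (k+1),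
      p.2 = q.2 → p.1 = q.1 := by
    rintro p ⟨l1, hl1, e1, f1⟩ q ⟨l2, hl2, e2, f2⟩ hm
    by_contra hne
    have hne' : H.eval l1 ≠ H.eval l2 := by rw [e1, e2]; exact hne
    obtain ⟨c0, hc0⟩ := hH.2 l1 l2 hne'
    obtain ⟨c, hcW, hcd⟩ := hW.2 l1 l2 ⟨c0, hc0⟩
    apply hcd
    rw [hagree c hcW l1 hl1, hagree c hcW l2 hl2]
    unfold Recognizer.accepts
    rw [eval_ctx, eval_ctx, f1, f2, hm]
  -- lower bound on the size of the level-0 pair set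
  have hlow : n ≤ (pairSet H M P 0).ncard := by
    choose f hfP hfe using hP.2
    have hf : Function.Injective (fun m : mH =>
        (⟨(m, M.eval (f m)), ⟨f m, Or.inl (Or.inl (hfP m)), hfe m, rfl⟩⟩ :
          ↥(pairSet H M P 0))) := by
      intro a b hab
      simpa using congrArg (fun x : ↥(pairSet H M P 0) => (x : mH × mM).1) hab
    calc n = Nat.card mH := hn.symm
      _ ≤ Nat.card ↥(pairSet H M P 0) := Nat.card_le_card_of_injective _ hf
      _ = (pairSet H M P 0).ncard := Nat.card_coe_set_eq _
  -- upper bound on the size of the level-(k+1) pair set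
  have hub : (pairSet H M P (k+1)).ncard ≤ n + k := by
    have hinj : Function.Injective
        (fun p : ↥(pairSet H M P (k+1)) => (p : mH × mM).2) := by
      intro p q hpq
      exact Subtype.ext (Prod.ext (hsnd p.1 p.2 q.1 q.2 hpq) hpq)
    calc (pairSet H M P (k+1)).ncard
        = Nat.card ↥(pairSet H M P (k+1)) := (Nat.card_coe_set_eq _).symm
      _ ≤ Nat.card mM := Nat.card_le_card_of_injective _ hinj
      _ ≤ n + k := hhi
  -- the chain of pair sets must stop growing at some level ≤ k
  have hex : ∃ i ≤ k, pairSet H M P (i+1) ⊆ pairSet H M P i := by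
    by_contra hco
    push_neg at hco
    have hstrict : ∀ i, i ≤ k → pairSet H M P i ⊂ pairSet H M P (i+1) := by
      intro i hi
      rw [Set.ssubset_def]
      exact ⟨pairSet_mono H M P i, fun h => hco i hi h⟩
    have hcard : ∀ i, i ≤ k + 1 → n + i ≤ (pairSet H M P i).ncard := by
      intro i
      induction i with
      | zero => intro _; simpa using hlow
      | succ i ih =>
        intro hi
        have h1 : n + i ≤ (pairSet H M P i).ncard := ih (by omega)
        have h2 : (pairSet H M P i).ncard < (pairSet H M P (i+1)).ncard :=
          Set.ncard_lt_ncard (hstrict i (by omega)) (Set.toFinite _)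
        omega
    have := hcard (k+1) le_rfl
    omega
  obtain ⟨i, hik, hstab⟩ := hex
  have hstep : ∀ j, i ≤ j → pairSet H M P (j+1) ⊆ pairSet H M P j := by
    intro j hj
    induction j, hj using Nat.le_induction with
    | base => exact hstab
    | succ j hj ih => exact pairSet_closure H M P j ih
  have hkk : pairSet H M P (k+1) ⊆ pairSet H M P k := hstep k hik
  constructor
  · rintro m1 m2 ⟨l, hl, rfl, rfl⟩
    have := hagree Ctx.hole hW.1 l (hLmono k (k+1) (by omega) hl)
    simpa [Ctx.app, Recognizer.accepts] using this
  · rintro m1 m2 m1' m2' ⟨l, hl, rfl, rfl⟩ ⟨l', hl', rfl, rfl⟩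
    constructor
    · exact hkk (show (H.str.seq (H.eval l) (H.eval l'),
          M.str.seq (M.eval l) (M.eval l')) ∈ pairSet H M P (k+1) from
        ⟨SP.seq l l', Or.inr ⟨l, hl, l', hl', Or.inl rfl⟩,
          by rw [eval_seq], by rw [eval_seq]⟩)
    · exact hkk (show (H.str.par (H.eval l) (H.eval l'),
          M.str.par (M.eval l) (M.eval l')) ∈ pairSet H M P (k+1) from
        ⟨SP.par l l', Or.inr ⟨l, hl, l', hl', Or.inr rfl⟩,
          by rw [eval_par], by rw [eval_par]⟩)
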